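/- For 1 ≤ p < 2, the constant B_p = (Γ(p+1)/(2Γ(p/2+1)²))^{1/p} satisfies B_p < 1, and B_1 = 2/π and B_2 = 1. -/

import Mathlib

open Real Set

lemma Gamma_three_halves' : Real.Gamma (3/2) = Real.sqrt Real.pi / 2 := by
  have h := Real.Gamma_add_one (s := (1/2 : ℝ)) (by norm_num)
  have e : (1/2 : ℝ) + 1 = 3/2 := by norm_num
  rw [e] at h
  rw [h, Real.Gamma_one_half_eq]; ring

lemma Gamma_five_halves' : Real.Gamma (5/2) = 3 * Real.sqrt Real.pi / 4 := by
  have h := Real.Gamma_add_one (s := (3/2 : ℝ)) (by norm_num)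
  have e : (3/2 : ℝ) + 1 = 5/2 := by norm_num
  rw [e] at h
  rw [h, Gamma_three_halves']; ring

lemma log_Gamma_five_halves_lt' : Real.log (Real.Gamma (5/2)) < Real.log 2 / 2 := by
  rw [Gamma_five_halves']
  have hs : (0:ℝ) < Real.sqrt Real.pi := Real.sqrt_pos.mpr Real.pi_pos
  have hsq : Real.sqrt Real.pi ^ 2 = Real.pi := Real.sq_sqrt Real.pi_pos.le
  have h1 : (3 * Real.sqrt Real.pi / 4) ^ 2 < 2 := by nlinarith [Real.pi_lt_d2]
  have h2 := Real.log_lt_log (x := (3 * Real.sqrt Real.pi / 4)^2) (by positivity) h1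
  rw [Real.log_pow] at h2
  push_cast at h2
  linarith

-- key inequality: Γ(p+1) < 2 Γ(p/2+1)² for 1 < p < 2
lemma key_ineq {p : ℝ} (hp1 : 1 < p) (hp2 : p < 2) :
    Real.Gamma (p + 1) < 2 * Real.Gamma (p / 2 + 1) ^ 2 := by
  have hconv := Real.convexOn_log_Gamma
  set f : ℝ → ℝ := Real.log ∘ Real.Gamma with hf
  have f2 : f 2 = 0 := by simp [hf, Real.Gamma_two]
  have f3 : f 3 = Real.log 2 := by norm_num [hf]
  have f52 : f (5/2) < Real.log 2 / 2 := log_Gamma_five_halves_lt'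
  set x := p + 1 with hx
  -- upper bound : f x < (x - 2) * log 2
  have hupper : f x < (x - 2) * Real.log 2 := by
    rcases le_or_gt x (5/2) with hcase | hcase
    · have hcomb := hconv.2 (mem_Ioi.mpr (by norm_num : (0:ℝ) < 2))
        (mem_Ioi.mpr (by norm_num : (0:ℝ) < 5/2))
        (by linarith : (0:ℝ) ≤ 5 - 2*x) (by linarith : (0:ℝ) ≤ 2*x - 4) (by ring)
      have he : (5 - 2*x) • (2:ℝ) + (2*x - 4) • (5/2 : ℝ) = x := by
        simp [smul_eq_mul]; ring
      rw [he] at hcomb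
      have hb : (0:ℝ) < 2*x - 4 := by simp [hx]; linarith
      have : (2*x - 4) * f (5/2) < (2*x - 4) * (Real.log 2 / 2) :=
        mul_lt_mul_of_pos_left f52 hb
      calc f x ≤ (5 - 2*x) • f 2 + (2*x - 4) • f (5/2) := hcomb
        _ = (2*x - 4) * f (5/2) := by rw [f2]; simp [smul_eq_mul]
        _ < (2*x - 4) * (Real.log 2 / 2) := this
        _ = (x - 2) * Real.log 2 := by ring
    · have hx3 : x < 3 := by simp [hx]; linarith
      have hcomb := hconv.2 (mem_Ioi.mpr (by norm_num : (0:ℝ) < 5/2))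
        (mem_Ioi.mpr (by norm_num : (0:ℝ) < 3))
        (by linarith : (0:ℝ) ≤ 6 - 2*x) (by linarith : (0:ℝ) ≤ 2*x - 5) (by ring)
      have he : (6 - 2*x) • (5/2:ℝ) + (2*x - 5) • (3 : ℝ) = x := by
        simp [smul_eq_mul]; ring
      rw [he] at hcomb
      have ha : (0:ℝ) < 6 - 2*x := by linarith
      have : (6 - 2*x) * f (5/2) < (6 - 2*x) * (Real.log 2 / 2) :=
        mul_lt_mul_of_pos_left f52 ha
      calc f x ≤ (6 - 2*x) • f (5/2) + (2*x - 5) • f 3 := hcomb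
        _ = (6 - 2*x) * f (5/2) + (2*x - 5) * Real.log 2 := by rw [f3]; simp [smul_eq_mul]
        _ < (6 - 2*x) * (Real.log 2 / 2) + (2*x - 5) * Real.log 2 := by linarith
        _ = (x - 2) * Real.log 2 := by ring
  -- lower bound : f t ≥ (t - 2) * log 2 for t = p/2 + 1
  set t := p / 2 + 1 with ht
  have ht0 : (0:ℝ) < t := by simp [ht]; linarith
  have ht2 : t < 2 := by simp [ht]; linarith
  have hslope := hconv.slope_mono_adjacent (x := t) (y := 2) (z := 3)
    (mem_Ioi.mpr ht0) (mem_Ioi.mpr (by norm_num : (0:ℝ) < 3)) ht2 (by norm_num)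
  rw [f2, f3] at hslope
  have hlower : (t - 2) * Real.log 2 ≤ f t := by
    have h2t : (0:ℝ) < 2 - t := by linarith
    rw [div_le_div_iff₀ h2t (by norm_num : (0:ℝ) < 3 - 2)] at hslope
    nlinarith
  -- convert to Gamma
  have hxpos : (0:ℝ) < x := by simp [hx]; linarith
  have hGx : Real.Gamma x < Real.exp ((x - 2) * Real.log 2) := by
    have h' : Real.log (Real.Gamma x) < (x - 2) * Real.log 2 := hupper
    exact (Real.log_lt_iff_lt_exp (Real.Gamma_pos_of_pos hxpos)).mp h'
  have hGt : Real.exp ((t - 2) * Real.log 2) ≤ Real.Gamma t := by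
    rw [← Real.le_log_iff_exp_le (Real.Gamma_pos_of_pos ht0)]
    exact hlower
  have hsq : Real.exp ((t - 2) * Real.log 2) ^ 2 ≤ Real.Gamma t ^ 2 := by
    have := Real.exp_pos ((t - 2) * Real.log 2)
    nlinarith
  have hexp : 2 * Real.exp ((t - 2) * Real.log 2) ^ 2 = Real.exp ((x - 2) * Real.log 2) := by
    calc 2 * Real.exp ((t - 2) * Real.log 2) ^ 2
        = Real.exp (Real.log 2) * Real.exp ((t - 2) * Real.log 2 + (t - 2) * Real.log 2) := by
          rw [Real.exp_log (by norm_num : (0:ℝ) < 2), sq, Real.exp_add]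
      _ = Real.exp (Real.log 2 + ((t - 2) * Real.log 2 + (t - 2) * Real.log 2)) :=
          (Real.exp_add _ _).symm
      _ = Real.exp ((x - 2) * Real.log 2) := by
          congr 1
          simp only [ht, hx]
          ring
  calc Real.Gamma x < Real.exp ((x - 2) * Real.log 2) := hGx
    _ = 2 * Real.exp ((t - 2) * Real.log 2) ^ 2 := hexp.symm
    _ ≤ 2 * Real.Gamma t ^ 2 := by linarith

/-- B_p = (Γ(p+1)/(2Γ(p/2+1)²))^{1/p} -/
noncomputable def Bp (p : ℝ) : ℝ :=
  (Real.Gamma (p + 1) / (2 * Real.Gamma (p / 2 + 1) ^ 2)) ^ (1/p)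

lemma Bp_one : Bp 1 = 2 / Real.pi := by
  have hb : Real.Gamma ((1:ℝ) + 1) / (2 * Real.Gamma ((1:ℝ) / 2 + 1) ^ 2) = 2 / Real.pi := by
    rw [show (1:ℝ)/2 + 1 = 3/2 by norm_num, Gamma_three_halves',
      show (1:ℝ) + 1 = 2 by norm_num, Real.Gamma_two,
      div_pow, Real.sq_sqrt Real.pi_pos.le]
    field_simp
  rw [Bp, hb]
  norm_num

theorem Bp_properties :
    (∀ p : ℝ, 1 ≤ p → p < 2 → Bp p < 1) ∧ Bp 1 = 2 / Real.pi ∧ Bp 2 = 1 := by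
  refine ⟨?_, Bp_one, ?_⟩
  · intro p hp1 hp2
    rcases eq_or_lt_of_le hp1 with h | h
    · rw [← h, Bp_one]
      rw [div_lt_one Real.pi_pos]
      linarith [Real.pi_gt_three]
    · have hkey := key_ineq h hp2
      have hden : (0:ℝ) < 2 * Real.Gamma (p / 2 + 1) ^ 2 := by
        have := Real.Gamma_pos_of_pos (show (0:ℝ) < p/2+1 by linarith)
        positivity
      have hnum : (0:ℝ) < Real.Gamma (p + 1) := Real.Gamma_pos_of_pos (by linarith)
      have hbase : Real.Gamma (p + 1) / (2 * Real.Gamma (p / 2 + 1) ^ 2) < 1 :=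
        (div_lt_one hden).mpr hkey
      exact Real.rpow_lt_one (le_of_lt (div_pos hnum hden)) hbase (by positivity)
  · rw [Bp]
    norm_num [Real.Gamma_two]
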